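/- A Riemannian immersion φ: (Mᵐ,g) → (N,h) with S₂ = 0 and m ≠ 4 is minimal. (From the trace of S₂ = 0 for a Riemannian immersion one gets ((4−m)/2)|τ(φ)|² = 0 pointwise.) -/
import Mathlib


open scoped RealInnerProductSpace
noncomputable section

/-- A fixed orthonormal frame of the (model) tangent space of the `m`-dimensional
Riemannian manifold `M`. -/
def onb (m : ℕ) : OrthonormalBasis (Fin m) ℝ (EuclideanSpace ℝ (Fin m)) :=
  EuclideanSpace.basisFun (Fin m) ℝ

/-- The biharmonic stress-energy tensor
`S₂(X,Y) = ½|τ(φ)|² ⟨X,Y⟩ + ⟨dφ,∇τ(φ)⟩ ⟨X,Y⟩ − ⟨dφ(X),∇_Y τ(φ)⟩ − ⟨dφ(Y),∇_X τ(φ)⟩`,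
expressed pointwise in terms of the differential `dphi` of `φ`, the tension field `tau`
and its covariant derivative `Dtau` (the trace `⟨dφ,∇τ(φ)⟩` being computed in an
orthonormal frame). -/
def S2 {m : ℕ} {F : Type*} [NormedAddCommGroup F] [InnerProductSpace ℝ F]
    (dphi : EuclideanSpace ℝ (Fin m) →ₗ[ℝ] F) (tau : F)
    (Dtau : EuclideanSpace ℝ (Fin m) →ₗ[ℝ] F)
    (X Y : EuclideanSpace ℝ (Fin m)) : ℝ :=
  (1 / 2 : ℝ) * ‖tau‖ ^ 2 * ⟪X, Y⟫
    + (∑ i, ⟪dphi (onb m i), Dtau (onb m i)⟫) * ⟪X, Y⟫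
    - ⟪dphi X, Dtau Y⟫ - ⟪dphi Y, Dtau X⟫

/-- A Riemannian immersion `φ : (Mᵐ,g) → (N,h)` with `S₂ = 0` and
`m ≠ 4` is minimal (`τ(φ) = 0`); `M` need not be compact. -/
theorem immersion_S2_zero_minimal
    (m : ℕ) (hm : m ≠ 4)
    (M : Type*) (F : Type*) [NormedAddCommGroup F] [InnerProductSpace ℝ F]
    (dphi : M → EuclideanSpace ℝ (Fin m) →ₗ[ℝ] F)
    (B : M → EuclideanSpace ℝ (Fin m) →ₗ[ℝ] EuclideanSpace ℝ (Fin m) →ₗ[ℝ] F)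
    (tau : M → F)
    (Dtau : M → EuclideanSpace ℝ (Fin m) →ₗ[ℝ] F)
    (hiso : ∀ p X Y, ⟪dphi p X, dphi p Y⟫ = ⟪X, Y⟫)
    (hBsymm : ∀ p X Y, B p X Y = B p Y X)
    (hBnormal : ∀ p X Y Z, ⟪B p X Y, dphi p Z⟫ = 0)
    (htau : ∀ p, tau p = ∑ i, B p (onb m i) (onb m i))
    (hDtau : ∀ p X Y, ⟪Dtau p X, dphi p Y⟫ = -⟪tau p, B p X Y⟫)
    (hS2 : ∀ p X Y, S2 (dphi p) (tau p) (Dtau p) X Y = 0) :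
    ∀ p, tau p = 0 := by
  intro p
  have key : ∀ X Y : EuclideanSpace ℝ (Fin m),
      ⟪dphi p X, Dtau p Y⟫ = -⟪tau p, B p X Y⟫ := by
    intro X Y
    rw [real_inner_comm, hDtau p Y X, hBsymm]
  have hτsum : ∑ i, ⟪tau p, B p (onb m i) (onb m i)⟫ = ‖tau p‖ ^ 2 := by
    rw [← inner_sum, ← htau, real_inner_self_eq_norm_sq]
  have hone : ∀ i : Fin m, ⟪(onb m i : EuclideanSpace ℝ (Fin m)), onb m i⟫ = (1 : ℝ) := by
    intro i
    rw [real_inner_self_eq_norm_sq, (onb m).orthonormal.1 i]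
    norm_num
  have h0 : (0 : ℝ) = ∑ i : Fin m, S2 (dphi p) (tau p) (Dtau p) (onb m i) (onb m i) := by
    simp [hS2 p]
  simp only [S2, hone, key, mul_one, sub_neg_eq_add, Finset.sum_add_distrib,
    Finset.sum_const, Finset.card_univ, Fintype.card_fin, nsmul_eq_mul, hτsum,
    Finset.sum_neg_distrib] at h0
  have hne : ((4 : ℝ) - m) ≠ 0 := by
    intro h
    apply hm
    have : (m : ℝ) = 4 := by linarith
    exact_mod_cast this
  have ht : ‖tau p‖ ^ 2 = 0 := by
    rcases mul_eq_zero.mp (show ((4 : ℝ) - m) * ‖tau p‖ ^ 2 = 0 by linarith) with h | h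
    · exact absurd h hne
    · exact h
  have := pow_eq_zero_iff (n := 2) (by norm_num) |>.mp ht
  exact norm_eq_zero.mp this

end
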